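/- Let (X_ℓ) be random variables with support ℕ₀ and finite support for each ℓ, and suppose P(X_ℓ ≤ k) = exp(−δℓ/a^k)(1 + o(1)) uniformly for k = log_a ℓ + O(1), where a > 1 and δ > 0. Then X_ℓ − log_a ℓ converges weakly to a double-exponential (Gumbel-type) limit along subsequences of ℓ for which the fractional part {log_a ℓ} converges; specifically, if {log_a ℓ + log_a δ} → β, then P(X_ℓ − ⌊log_a ℓ + log_a δ⌋ ≤ m) → exp(−a^{β−m}) for each integer m. -/

import Mathlib

open Real Filter

/-- Double-exponential (Gumbel-type) limit law. If `P(X_ℓ ≤ k)` (encoded by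
`p ℓ k`) satisfies `P(X_ℓ ≤ k) = exp(-δℓ/a^k)(1 + o(1))` uniformly for
`k = log_a ℓ + O(1)`, then along subsequences where the fractional part
`{log_a ℓ + log_a δ}` converges to `β`, we have
`P(X_ℓ - ⌊log_a ℓ + log_a δ⌋ ≤ m) → exp(-a^{β-m})` for each integer `m`. -/
theorem double_exponential_limit
    (a δ : ℝ) (ha : 1 < a) (hδ : 0 < δ)
    (p : ℕ → ℤ → ℝ)
    (hcdf : ∀ ℓ : ℕ, Monotone (p ℓ))
    (hprob : ∀ ℓ : ℕ, ∀ k : ℤ, 0 ≤ p ℓ k ∧ p ℓ k ≤ 1)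
    (hsupp : ∀ ℓ : ℕ, ∀ k : ℤ, k < 0 → p ℓ k = 0)
    (hfin : ∀ ℓ : ℕ, ∃ K : ℤ, ∀ k ≥ K, p ℓ k = 1)
    (hunif : ∀ C > 0, ∀ ε > 0, ∃ N : ℕ, ∀ ℓ ≥ N, ∀ k : ℤ,
      |(k : ℝ) - Real.logb a ℓ| ≤ C →
        |p ℓ k - Real.exp (-δ * ℓ / a ^ k)| ≤ ε * Real.exp (-δ * ℓ / a ^ k))
    (L : ℕ → ℕ) (hL : Tendsto L atTop atTop) (β : ℝ)
    (hfrac : Tendsto (fun n => Int.fract (Real.logb a (L n) + Real.logb a δ))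
      atTop (nhds β)) :
    ∀ m : ℤ, Tendsto
      (fun n => p (L n) (⌊Real.logb a (L n) + Real.logb a δ⌋ + m))
      atTop (nhds (Real.exp (-(a ^ (β - (m : ℝ)))))) := by
  intro m
  have ha0 : (0:ℝ) < a := lt_trans one_pos ha
  set x : ℕ → ℝ := fun n => Real.logb a (L n) + Real.logb a δ with hx
  set k : ℕ → ℤ := fun n => ⌊x n⌋ + m with hk
  set f : ℕ → ℝ := fun n => Real.exp (-δ * (L n : ℝ) / a ^ k n) with hf
  -- key identity for large n
  have h1 : ∀ᶠ n in atTop, f n = Real.exp (-(a ^ (Int.fract (x n) - (m:ℝ)))) := by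
    filter_upwards [hL.eventually_ge_atTop 1] with n hn
    have hL0 : (0:ℝ) < (L n : ℝ) := by exact_mod_cast hn
    have hδL : (0:ℝ) < δ * (L n : ℝ) := mul_pos hδ hL0
    have hxlog : δ * (L n : ℝ) = a ^ (x n) := by
      rw [show x n = Real.logb a (δ * (L n : ℝ)) by
        rw [Real.logb_mul (ne_of_gt hδ) (ne_of_gt hL0)]; ring]
      exact (Real.rpow_logb ha0 ha.ne' hδL).symm
    have hazk : (a:ℝ) ^ (k n) = a ^ ((k n : ℝ)) := (Real.rpow_intCast a (k n)).symm
    have harg : -δ * (L n : ℝ) / a ^ (k n) = -(a ^ (x n - (k n : ℝ))) := by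
      rw [hazk, Real.rpow_sub ha0, ← hxlog]; ring
    have hfrac' : x n - (k n : ℝ) = Int.fract (x n) - (m : ℝ) := by
      rw [hk]; push_cast; rw [Int.fract]; ring
    rw [hf]; simp only; rw [harg, hfrac']
  have h2 : Tendsto (fun n => Int.fract (x n) - (m:ℝ)) atTop (nhds (β - (m:ℝ))) :=
    hfrac.sub tendsto_const_nhds
  have hcont : Continuous fun y : ℝ => Real.exp (-(a ^ y)) := by
    have : (fun y : ℝ => Real.exp (-(a ^ y)))
        = fun y : ℝ => Real.exp (-(Real.exp (Real.log a * y))) := by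
      funext y; rw [Real.rpow_def_of_pos ha0]
    rw [this]
    exact (((continuous_const.mul continuous_id).rexp).neg).rexp
  have hf_lim : Tendsto f atTop (nhds (Real.exp (-(a ^ (β - (m:ℝ)))))) :=
    Tendsto.congr' (by filter_upwards [h1] with n hn; exact hn.symm)
      ((hcont.tendsto _).comp h2)
  have hdiff : Tendsto (fun n => p (L n) (k n) - f n) atTop (nhds 0) := by
    rw [NormedAddCommGroup.tendsto_nhds_zero]
    intro ε hε
    have hC : (0:ℝ) < |Real.logb a δ| + |(m:ℝ)| + 1 := by positivity
    obtain ⟨N, hN⟩ := hunif _ hC (ε/2) (half_pos hε)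
    filter_upwards [hL.eventually_ge_atTop (max N 1)] with n hn
    have hnN : L n ≥ N := le_trans (le_max_left _ _) hn
    have hn1 : L n ≥ 1 := le_trans (le_max_right _ _) hn
    have hL0 : (0:ℝ) < (L n : ℝ) := by exact_mod_cast hn1
    have hbound : |(k n : ℝ) - Real.logb a (L n)| ≤ |Real.logb a δ| + |(m:ℝ)| + 1 := by
      have h2' : (k n : ℝ) - Real.logb a (L n)
          = -(Int.fract (x n)) + Real.logb a δ + (m:ℝ) := by
        rw [hk]; push_cast; rw [Int.fract, hx]; ring
      rw [h2']
      calc |-(Int.fract (x n)) + Real.logb a δ + (m:ℝ)|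
          ≤ |-(Int.fract (x n)) + Real.logb a δ| + |(m:ℝ)| := abs_add_le _ _
        _ ≤ |-(Int.fract (x n))| + |Real.logb a δ| + |(m:ℝ)| := by
            gcongr; exact abs_add_le _ _
        _ ≤ 1 + |Real.logb a δ| + |(m:ℝ)| := by
            gcongr
            rw [abs_neg, abs_of_nonneg (Int.fract_nonneg _)]
            exact le_of_lt (Int.fract_lt_one _)
        _ = |Real.logb a δ| + |(m:ℝ)| + 1 := by ring
    have hkey := hN (L n) hnN (k n) hbound
    have hexple : Real.exp (-δ * (L n : ℝ) / a ^ (k n)) ≤ 1 := by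
      rw [Real.exp_le_one_iff]
      have : (0:ℝ) < a ^ (k n) := zpow_pos ha0 _
      have hnum : -δ * (L n : ℝ) ≤ 0 := by nlinarith
      exact div_nonpos_of_nonpos_of_nonneg hnum (le_of_lt this)
    calc ‖p (L n) (k n) - f n‖ = |p (L n) (k n) - Real.exp (-δ * (L n : ℝ) / a ^ (k n))| := rfl
      _ ≤ (ε/2) * Real.exp (-δ * (L n : ℝ) / a ^ (k n)) := hkey
      _ ≤ (ε/2) * 1 := by
          apply mul_le_mul_of_nonneg_left hexple (le_of_lt (half_pos hε))
      _ < ε := by linarith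
  have hsum := hdiff.add hf_lim
  rw [zero_add] at hsum
  have : (fun n => p (L n) (k n) - f n + f n) = fun n => p (L n) (k n) := by
    funext n; ring
  rw [this] at hsum
  exact hsum
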